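/- Abstract version of the favorable-interval lemma: let J ⊆ [0, t] be a finite set of 'jump times' with |J| ≤ βt. Call an interval [s−√t, s) favorable if for all u ∈ [s−√t, s), |J ∩ [u, s)| ≤ 4β(s−u). Then one can find at least √t/4 − 1 pairwise disjoint favorable intervals contained in [0, t/2]. -/

import Mathlib

open scoped Classical

/-- Abstract favorable-interval lemma: if `J ⊆ [0,t]` is a finite set of jump times
with `|J| ≤ β t`, then there are at least `√t/4 − 1` pairwise disjoint intervals
`[s − √t, s) ⊆ [0, t/2]` that are favorable, i.e. for all `u ∈ [s − √t, s)`,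
`|J ∩ [u, s)| ≤ 4 β (s − u)`. -/
theorem favorable_intervals_abstract
    (t β : ℝ) (ht : 16 ≤ t) (hβ : 0 < β)
    (J : Finset ℝ)
    (hJsub : (J : Set ℝ) ⊆ Set.Icc 0 t)
    (hJcard : (J.card : ℝ) ≤ β * t) :
    ∃ S : Finset ℝ,
      Real.sqrt t / 4 - 1 ≤ (S.card : ℝ) ∧
      (∀ s ∈ S, 0 ≤ s - Real.sqrt t ∧ s ≤ t / 2 ∧
        ∀ u ∈ Set.Ico (s - Real.sqrt t) s,
          ((J.filter (fun x => u ≤ x ∧ x < s)).card : ℝ) ≤ 4 * β * (s - u)) ∧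
      (∀ s ∈ S, ∀ s' ∈ S, s ≠ s' →
        Disjoint (Set.Ico (s - Real.sqrt t) s) (Set.Ico (s' - Real.sqrt t) s')) := by
  set r := Real.sqrt t with hr
  have hr4 : (4 : ℝ) ≤ r := by
    have : Real.sqrt 16 ≤ Real.sqrt t := Real.sqrt_le_sqrt ht
    have h16 : Real.sqrt 16 = 4 := by
      rw [show (16 : ℝ) = 4 ^ 2 by norm_num, Real.sqrt_sq (by norm_num : (0:ℝ) ≤ 4)]
    linarith [this, h16 ▸ this]
  have hr0 : (0 : ℝ) < r := by linarith
  have hrr : r * r = t := Real.mul_self_sqrt (by linarith)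
  set c : ℝ → ℕ := fun p => (J.filter (fun x => x < p)).card with hc
  have hsplit : ∀ u p : ℝ, u ≤ p →
      c p = c u + (J.filter (fun x => u ≤ x ∧ x < p)).card := by
    intro u p hup
    have heq : J.filter (fun x => x < p)
        = J.filter (fun x => x < u) ∪ J.filter (fun x => u ≤ x ∧ x < p) := by
      ext x
      simp only [Finset.mem_filter, Finset.mem_union]
      constructor
      · rintro ⟨hx, hxp⟩
        rcases lt_or_ge x u with h | h
        · exact Or.inl ⟨hx, h⟩
        · exact Or.inr ⟨hx, h, hxp⟩
      · rintro (⟨hx, h⟩ | ⟨hx, h1, h2⟩)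
        · exact ⟨hx, lt_of_lt_of_le h hup⟩
        · exact ⟨hx, h2⟩
    have hdisj : Disjoint (J.filter (fun x => x < u))
        (J.filter (fun x => u ≤ x ∧ x < p)) := by
      rw [Finset.disjoint_left]
      intro a ha hb
      simp only [Finset.mem_filter] at ha hb
      linarith [ha.2, hb.2.1]
    simp only [hc]
    rw [heq, Finset.card_union_of_disjoint hdisj]
  have hcmono : ∀ u p : ℝ, u ≤ p → c u ≤ c p := by
    intro u p hup
    apply Finset.card_le_card
    intro x hx
    simp only [Finset.mem_filter] at hx ⊢
    exact ⟨hx.1, lt_of_lt_of_le hx.2 hup⟩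
  have key : ∀ n : ℕ, ∀ p : ℝ, (c p : ℝ) + p / r ≤ n →
      ∃ S : Finset ℝ,
        p - r - (c p : ℝ) / (4 * β) ≤ r * S.card ∧
        (∀ s ∈ S, 0 ≤ s - r ∧ s ≤ p ∧
          ∀ u ∈ Set.Ico (s - r) s,
            ((J.filter (fun x => u ≤ x ∧ x < s)).card : ℝ) ≤ 4 * β * (s - u)) ∧
        (∀ s ∈ S, ∀ s' ∈ S, s ≠ s' →
          Disjoint (Set.Ico (s - r) s) (Set.Ico (s' - r) s')) := by
    intro n
    induction n with
    | zero =>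
      intro p hp
      have hpr : p < r := by
        by_contra h
        push_neg at h
        have h1 : (1 : ℝ) ≤ p / r := (one_le_div hr0).2 h
        have h0 : (0 : ℝ) ≤ (c p : ℝ) := Nat.cast_nonneg _
        norm_num at hp
        linarith
      refine ⟨∅, ?_, by simp, by simp⟩
      have h0 : (0 : ℝ) ≤ (c p : ℝ) / (4 * β) := by positivity
      simp only [Finset.card_empty, Nat.cast_zero, mul_zero]
      linarith
    | succ n ih =>
      intro p hp
      by_cases hpr : p < r
      · refine ⟨∅, ?_, by simp, by simp⟩
        have h0 : (0 : ℝ) ≤ (c p : ℝ) / (4 * β) := by positivity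
        simp only [Finset.card_empty, Nat.cast_zero, mul_zero]
        linarith
      push_neg at hpr
      by_cases hfav : ∀ u ∈ Set.Ico (p - r) p,
          ((J.filter (fun x => u ≤ x ∧ x < p)).card : ℝ) ≤ 4 * β * (p - u)
      · -- p is favorable, take it and recurse on p - r
        have hmeas : (c (p - r) : ℝ) + (p - r) / r ≤ n := by
          have h1 : (c (p - r) : ℝ) ≤ c p := by
            exact_mod_cast hcmono _ _ (by linarith)
          have h2 : (p - r) / r = p / r - 1 := by
            field_simp
          push_cast at hp
          linarith
        obtain ⟨S, hS1, hS2, hS3⟩ := ih (p - r) hmeas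
        have hpnot : p ∉ S := by
          intro hmem
          have := (hS2 p hmem).2.1
          linarith
        refine ⟨insert p S, ?_, ?_, ?_⟩
        · rw [Finset.card_insert_of_notMem hpnot]
          push_cast
          have h1 : (c (p - r) : ℝ) ≤ c p := by
            exact_mod_cast hcmono _ _ (by linarith)
          have h2' : (c (p - r) : ℝ) / (4 * β) ≤ (c p : ℝ) / (4 * β) := by
            gcongr
          have := hS1
          nlinarith [h2']
        · intro s hs
          rcases Finset.mem_insert.1 hs with rfl | hs
          · exact ⟨by linarith, le_refl _, hfav⟩
          · obtain ⟨h1, h2, h3⟩ := hS2 s hs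
            exact ⟨h1, by linarith, h3⟩
        · have hdis : ∀ a b : ℝ, b ≤ a - r →
              Disjoint (Set.Ico (a - r) a) (Set.Ico (b - r) b) := by
            intro a b h
            rw [Set.Ico_disjoint_Ico]
            exact le_trans (min_le_right _ _) (le_trans h (le_max_left _ _))
          intro s hs s' hs' hne
          rcases Finset.mem_insert.1 hs with heq | hs0 <;>
            rcases Finset.mem_insert.1 hs' with heq' | hs0'
          · exact absurd (heq.trans heq'.symm) hne
          · subst heq
            exact hdis _ s' (hS2 s' hs0').2.1
          · subst heq'
            exact (hdis _ s (hS2 s hs0).2.1).symm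
          · exact hS3 s hs0 s' hs0' hne
      · -- p is unfavorable: jump to the witness u
        push_neg at hfav
        obtain ⟨u, hu, hcount⟩ := hfav
        obtain ⟨huL, huR⟩ := hu
        have hsp := hsplit u p (le_of_lt huR)
        set A : ℝ := ((J.filter (fun x => u ≤ x ∧ x < p)).card : ℝ) with hA
        have hcpu : (c p : ℝ) = (c u : ℝ) + A := by
          rw [hsp]; push_cast; ring
        have hApos : (0 : ℝ) < A := by
          have : (0 : ℝ) < 4 * β * (p - u) := by
            have : 0 < p - u := by linarith
            positivity
          linarith
        have hA1 : (1 : ℝ) ≤ A := by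
          rw [hA] at hApos ⊢
          have h0 : 0 < (J.filter (fun x => u ≤ x ∧ x < p)).card := by
            exact_mod_cast hApos
          exact_mod_cast h0
        have hmeas : (c u : ℝ) + u / r ≤ n := by
          have h2 : u / r ≤ p / r :=
            div_le_div_of_nonneg_right (le_of_lt huR) hr0.le
          push_cast at hp
          linarith [hcpu, hA1, h2]
        obtain ⟨S, hS1, hS2, hS3⟩ := ih u hmeas
        refine ⟨S, ?_, ?_, hS3⟩
        · have hdiv : p - u < A / (4 * β) := by
            rw [lt_div_iff₀ (by positivity : (0:ℝ) < 4 * β)]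
            nlinarith [hcount]
          have hsub : (c u : ℝ) / (4 * β) = (c p : ℝ) / (4 * β) - A / (4 * β) := by
            rw [hcpu]; ring
          linarith [hS1]
        · intro s hs
          obtain ⟨h1, h2, h3⟩ := hS2 s hs
          exact ⟨h1, by linarith, h3⟩
  -- apply at p = t / 2
  have hfin : (c (t / 2) : ℝ) + (t / 2) / r ≤ (J.card + ⌈t⌉₊ : ℕ) := by
    have h1 : (c (t / 2) : ℝ) ≤ J.card := by
      exact_mod_cast Finset.card_le_card (Finset.filter_subset _ _)
    have h2 : (t / 2) / r ≤ t / 2 := by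
      apply div_le_self (by linarith) (by linarith)
    have h3 : t ≤ (⌈t⌉₊ : ℝ) := Nat.le_ceil t
    push_cast
    linarith
  obtain ⟨S, hS1, hS2, hS3⟩ := key (J.card + ⌈t⌉₊) (t / 2) hfin
  refine ⟨S, ?_, ?_, hS3⟩
  · have h1 : (c (t / 2) : ℝ) ≤ β * t := by
      have : (c (t / 2) : ℝ) ≤ J.card := by
        exact_mod_cast Finset.card_le_card (Finset.filter_subset _ _)
      linarith
    have h2 : (c (t / 2) : ℝ) / (4 * β) ≤ t / 4 := by
      rw [div_le_iff₀ (by positivity : (0:ℝ) < 4 * β)]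
      nlinarith
    have h3 : t / 4 - r ≤ r * S.card := by linarith [hS1]
    have h4 : r * (r / 4 - 1) ≤ r * S.card := by nlinarith [hrr]
    have := (mul_le_mul_iff_right₀ hr0).1 h4
    linarith
  · intro s hs
    obtain ⟨h1, h2, h3⟩ := hS2 s hs
    exact ⟨h1, h2, h3⟩
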